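/- Suppose the base graph G contains a K_{2,3} subgraph: there exist vertices u1 ≠ u2 and pairwise distinct vertices w1, w2, w3 such that u_s is adjacent to w_t in G for all s ∈ {1,2} and t ∈ {1,2,3}. Suppose moreover that the voltage assignment takes pairwise commuting values: α u v and α u' v' commute for all u, v, u', v'. Then the permutation derived graph Ĝ has girth at most 12, i.e., Ĝ contains a cycle of length at most 12. -/

import Mathlib

/-- The permutation derived graph of a simple graph `G` under a permutation voltage
assignment `α` (with `α v u = (α u v)⁻¹`). -/
def derivedGraph {V : Type*} {n : ℕ} (G : SimpleGraph V)
    (α : V → V → Equiv.Perm (Fin n))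
    (hα : ∀ u v, α v u = (α u v)⁻¹) : SimpleGraph (V × Fin n) where
  Adj p q := G.Adj p.1 q.1 ∧ q.2 = α p.1 q.1 p.2
  symm := by
    constructor
    rintro ⟨u, i⟩ ⟨v, j⟩ ⟨hadj, hj⟩
    simp only at hadj hj ⊢
    subst hj
    exact ⟨hadj.symm, by simp [hα u v]⟩
  loopless := by
    constructor
    rintro ⟨u, i⟩ ⟨hadj, -⟩
    exact (G.ne_of_adj hadj) rfl

open SimpleGraph Equiv

theorem Equiv.Perm.apply_inv_self {β : Type*} (f : Equiv.Perm β) (x : β) : f (f⁻¹ x) = x :=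
  f.apply_symm_apply x

theorem Equiv.Perm.inv_apply_self {β : Type*} (f : Equiv.Perm β) (x : β) : f⁻¹ (f x) = x :=
  f.symm_apply_apply x

private lemma pswap {n : ℕ} {x y : Equiv.Perm (Fin n)} (h : Commute x y) (p : Fin n) :
    x (y p) = y (x p) := by
  rw [← Equiv.Perm.mul_apply, h.eq, Equiv.Perm.mul_apply]

private lemma girth_le_of_cycle {α : Type*} {G : SimpleGraph α} {a : α} {w : G.Walk a a}
    (hw : w.IsCycle) : G.girth ≤ w.length := by
  have h1 : G.egirth ≤ (w.length : ℕ∞) :=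
    le_trans (iInf_le _ a) (le_trans (iInf_le _ w) (iInf_le _ hw))
  have := ENat.toNat_le_toNat h1 (by simp)
  simpa [SimpleGraph.girth] using this

private lemma four_cycle_girth {V : Type*} {n : ℕ} (G : SimpleGraph V)
    (α : V → V → Equiv.Perm (Fin n)) (hα : ∀ u v, α v u = (α u v)⁻¹)
    (x y p q : V) (hxy : x ≠ y) (hpq : p ≠ q)
    (hxp : G.Adj x p) (hxq : G.Adj x q) (hyp : G.Adj y p) (hyq : G.Adj y q)
    (j : Fin n) (hfix : (α y p)⁻¹ (α x p j) = (α y q)⁻¹ (α x q j)) :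
    (derivedGraph G α hα).girth ≤ 4 := by
  set H := derivedGraph G α hα with hH
  have e0 : H.Adj (x, j) (p, α x p j) := ⟨hxp, rfl⟩
  have e1 : H.Adj (p, α x p j) (y, (α y p)⁻¹ (α x p j)) := by
    refine ⟨hyp.symm, ?_⟩
    rw [hα y p]
  have e2 : H.Adj (y, (α y p)⁻¹ (α x p j)) (q, α y q ((α y p)⁻¹ (α x p j))) := ⟨hyq, rfl⟩
  have e3 : H.Adj (q, α y q ((α y p)⁻¹ (α x p j))) (x, j) := by
    refine ⟨hxq.symm, ?_⟩
    rw [hfix, hα x q]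
    simp
  let w : H.Walk (x, j) (x, j) :=
    Walk.cons e0 (Walk.cons e1 (Walk.cons e2 (Walk.cons e3 Walk.nil)))
  have hc : w.IsCycle := by
    rw [Walk.cons_isCycle_iff]
    constructor
    · rw [Walk.isPath_def]
      simp only [Walk.support_cons, Walk.support_nil, List.nodup_cons, List.mem_cons,
        List.mem_singleton, List.not_mem_nil, or_false, Prod.mk.injEq, not_or, List.nodup_nil]
      simp [hxy, hxy.symm, hpq, hpq.symm, hxp.ne, hxp.ne', hxq.ne, hxq.ne',
        hyp.ne, hyp.ne', hyq.ne, hyq.ne']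
    · simp only [Walk.edges_cons, Walk.edges_nil, List.mem_cons, List.not_mem_nil, or_false,
        Sym2.eq_iff, Prod.mk.injEq]
      push_neg
      simp [hxy, hxy.symm, hpq, hpq.symm, hxp.ne, hxp.ne', hxq.ne, hxq.ne',
        hyp.ne, hyp.ne', hyq.ne, hyq.ne']
  have := girth_le_of_cycle hc
  simpa [w] using this

private lemma twelve_cycle_girth {V : Type*} {n : ℕ} (G : SimpleGraph V)
    (α : V → V → Equiv.Perm (Fin n)) (hα : ∀ u v, α v u = (α u v)⁻¹)
    (u1 u2 w1 w2 w3 : V) (hu : u1 ≠ u2)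
    (hw12 : w1 ≠ w2) (hw13 : w1 ≠ w3) (hw23 : w2 ≠ w3)
    (A B C D E F : Equiv.Perm (Fin n))
    (hE1 : α u1 w1 = A) (hE2 : α u1 w2 = B) (hE3 : α u1 w3 = C)
    (hE4 : α u2 w1 = D) (hE5 : α u2 w2 = E) (hE6 : α u2 w3 = F)
    (cAB : Commute A B) (cAC : Commute A C) (cAD : Commute A D)
    (cAE : Commute A E) (cAF : Commute A F) (cBC : Commute B C)
    (cBD : Commute B D) (cBE : Commute B E) (cBF : Commute B F)
    (cCD : Commute C D) (cCE : Commute C E) (cCF : Commute C F)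
    (cDE : Commute D E) (cDF : Commute D F) (cEF : Commute E F)
    (hA1 : G.Adj u1 w1) (hA2 : G.Adj u1 w2) (hA3 : G.Adj u1 w3)
    (hB1 : G.Adj u2 w1) (hB2 : G.Adj u2 w2) (hB3 : G.Adj u2 w3)
    (i : Fin n)
    (H12 : ∀ j, D⁻¹ (A j) ≠ E⁻¹ (B j))
    (H13 : ∀ j, D⁻¹ (A j) ≠ F⁻¹ (C j))
    (H23 : ∀ j, E⁻¹ (B j) ≠ F⁻¹ (C j)) :
    (derivedGraph G α hα).girth ≤ 12 := by
  set H := derivedGraph G α hα with hH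
  -- the twelve vertices' second coordinates
  -- j0 = i, j1 = A i, j2 = A (D⁻¹ i), j3 = A (D⁻¹ (E i)), j4 = A (B⁻¹ (D⁻¹ (E i))),
  -- j5 = A (B⁻¹ (C (D⁻¹ (E i)))), j6 = A (B⁻¹ (C (D⁻¹ (E (F⁻¹ i))))),
  -- j7 = A (B⁻¹ (C (E (F⁻¹ i)))), j8 = B⁻¹ (C (E (F⁻¹ i))), j9 = C (E (F⁻¹ i)),
  -- j10 = C (F⁻¹ i), j11 = C i
  have e0 : H.Adj (u1, i) (w1, A i) := ⟨hA1, by rw [hE1]⟩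
  have e1 : H.Adj (w1, A i) (u2, A (D⁻¹ i)) := by
    refine ⟨hB1.symm, ?_⟩
    rw [hα u2 w1, hE4]
    exact pswap cAD.inv_right i
  have e2 : H.Adj (u2, A (D⁻¹ i)) (w2, A (D⁻¹ (E i))) := by
    refine ⟨hB2, ?_⟩
    rw [hE5, pswap cAE.symm, pswap cDE.symm.inv_right]
  have e3 : H.Adj (w2, A (D⁻¹ (E i))) (u1, A (B⁻¹ (D⁻¹ (E i)))) := by
    refine ⟨hA2.symm, ?_⟩
    rw [hα u1 w2, hE2]
    exact pswap cAB.inv_right _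
  have e4 : H.Adj (u1, A (B⁻¹ (D⁻¹ (E i)))) (w3, A (B⁻¹ (C (D⁻¹ (E i))))) := by
    refine ⟨hA3, ?_⟩
    rw [hE3, pswap cAC.symm, pswap cBC.symm.inv_right]
  have e5 : H.Adj (w3, A (B⁻¹ (C (D⁻¹ (E i))))) (u2, A (B⁻¹ (C (D⁻¹ (E (F⁻¹ i)))))) := by
    refine ⟨hB3.symm, ?_⟩
    rw [hα u2 w3, hE6, pswap cAF.symm.inv_left, pswap cBF.symm.inv_left.inv_right,
      pswap cCF.symm.inv_left, pswap cDF.symm.inv_left.inv_right, pswap cEF.symm.inv_left]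
  have e6 : H.Adj (u2, A (B⁻¹ (C (D⁻¹ (E (F⁻¹ i)))))) (w1, A (B⁻¹ (C (E (F⁻¹ i))))) := by
    refine ⟨hB1, ?_⟩
    rw [hE4, pswap cAD.symm, pswap cBD.symm.inv_right, pswap cCD.symm,
      Equiv.Perm.apply_inv_self]
  have e7 : H.Adj (w1, A (B⁻¹ (C (E (F⁻¹ i))))) (u1, B⁻¹ (C (E (F⁻¹ i)))) := by
    refine ⟨hA1.symm, ?_⟩
    rw [hα u1 w1, hE1, Equiv.Perm.inv_apply_self]
  have e8 : H.Adj (u1, B⁻¹ (C (E (F⁻¹ i)))) (w2, C (E (F⁻¹ i))) := by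
    refine ⟨hA2, ?_⟩
    rw [hE2, Equiv.Perm.apply_inv_self]
  have e9 : H.Adj (w2, C (E (F⁻¹ i))) (u2, C (F⁻¹ i)) := by
    refine ⟨hB2.symm, ?_⟩
    rw [hα u2 w2, hE5, pswap cCE.symm.inv_left, Equiv.Perm.inv_apply_self]
  have e10 : H.Adj (u2, C (F⁻¹ i)) (w3, C i) := by
    refine ⟨hB3, ?_⟩
    rw [hE6, pswap cCF.symm, Equiv.Perm.apply_inv_self]
  have e11 : H.Adj (w3, C i) (u1, i) := by
    refine ⟨hA3.symm, ?_⟩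
    rw [hα u1 w3, hE3, Equiv.Perm.inv_apply_self]
  -- the needed disequalities between second coordinates
  have n04 : i ≠ A (B⁻¹ (D⁻¹ (E i))) := by
    intro h
    apply H12 (B⁻¹ (E i))
    rw [pswap cAD.symm.inv_left, pswap cBD.symm.inv_left.inv_right, ← h,
      Equiv.Perm.apply_inv_self, Equiv.Perm.inv_apply_self]
  have n08 : i ≠ B⁻¹ (C (E (F⁻¹ i))) := by
    intro h
    apply H23 i
    have hBi : B i = C (E (F⁻¹ i)) := by
      conv_lhs => rw [h]
      rw [Equiv.Perm.apply_inv_self]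
    rw [hBi, pswap cCE.symm.inv_left, Equiv.Perm.inv_apply_self, pswap cCF.symm.inv_left]
  have n48 : A (B⁻¹ (D⁻¹ (E i))) ≠ B⁻¹ (C (E (F⁻¹ i))) := by
    intro h
    apply H13 (B⁻¹ (E i))
    rw [pswap cAD.symm.inv_left, pswap cBD.symm.inv_left.inv_right, h,
      pswap cCF.symm.inv_left, pswap cBF.symm.inv_left.inv_right, pswap cEF.symm.inv_left,
      pswap cBC.symm.inv_right]
  have n26 : A (D⁻¹ i) ≠ A (B⁻¹ (C (D⁻¹ (E (F⁻¹ i))))) := by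
    intro h
    have h2 := Equiv.injective A h
    rw [pswap cCD.inv_right, pswap cBD.inv_left.inv_right] at h2
    exact n08 (Equiv.injective D⁻¹ h2)
  have n2_10 : A (D⁻¹ i) ≠ C (F⁻¹ i) := by
    intro h
    apply H13 i
    rw [pswap cAD.symm.inv_left, h, pswap cCF.symm.inv_left]
  have n6_10 : A (B⁻¹ (C (D⁻¹ (E (F⁻¹ i))))) ≠ C (F⁻¹ i) := by
    intro h
    apply H12 (B⁻¹ (C (E (F⁻¹ i))))
    rw [Equiv.Perm.apply_inv_self, pswap cAD.symm.inv_left,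
      pswap cBD.symm.inv_left.inv_right, pswap cCD.symm.inv_left, h,
      pswap cCE.symm.inv_left, Equiv.Perm.inv_apply_self]
  have n17 : A i ≠ A (B⁻¹ (C (E (F⁻¹ i)))) := fun h => n08 (Equiv.injective A h)
  have n39 : A (D⁻¹ (E i)) ≠ C (E (F⁻¹ i)) := by
    intro h
    apply H13 (E i)
    rw [pswap cAD.symm.inv_left, h, pswap cCF.symm.inv_left, pswap cEF.symm.inv_left]
  have n5_11 : A (B⁻¹ (C (D⁻¹ (E i)))) ≠ C i := by
    intro h
    apply H12 (B⁻¹ (C (E i)))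
    rw [Equiv.Perm.apply_inv_self, pswap cAD.symm.inv_left,
      pswap cBD.symm.inv_left.inv_right, pswap cCD.symm.inv_left, h,
      pswap cCE.symm.inv_left, Equiv.Perm.inv_apply_self]
  -- assemble the walk
  let w : H.Walk (u1, i) (u1, i) :=
    Walk.cons e0 (Walk.cons e1 (Walk.cons e2 (Walk.cons e3 (Walk.cons e4 (Walk.cons e5
      (Walk.cons e6 (Walk.cons e7 (Walk.cons e8 (Walk.cons e9 (Walk.cons e10
        (Walk.cons e11 Walk.nil)))))))))))
  simp only [Equiv.Perm.coe_inv] at n04 n08 n48 n26 n2_10 n6_10 n17 n39 n5_11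
  have hc : w.IsCycle := by
    rw [Walk.cons_isCycle_iff]
    constructor
    · rw [Walk.isPath_def]
      simp only [Walk.support_cons, Walk.support_nil]
      simp [List.nodup_cons, Prod.mk.injEq, hu, hu.symm, hw12, hw12.symm, hw13, hw13.symm,
        hw23, hw23.symm, hA1.ne, hA1.ne', hA2.ne, hA2.ne', hA3.ne, hA3.ne',
        hB1.ne, hB1.ne', hB2.ne, hB2.ne', hB3.ne, hB3.ne',
        n04, n04.symm, n08, n08.symm, n48, n48.symm, n26, n26.symm, n2_10, n2_10.symm,
        n6_10, n6_10.symm, n17, n17.symm, n39, n39.symm, n5_11, n5_11.symm]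
    · simp only [Walk.edges_cons, Walk.edges_nil, List.mem_cons, List.not_mem_nil, or_false,
        Sym2.eq_iff, Prod.mk.injEq]
      push_neg
      simp [hu, hu.symm, hw12, hw12.symm, hw13, hw13.symm,
        hw23, hw23.symm, hA1.ne, hA1.ne', hA2.ne, hA2.ne', hA3.ne, hA3.ne',
        hB1.ne, hB1.ne', hB2.ne, hB2.ne', hB3.ne, hB3.ne',
        n04, n04.symm, n08, n08.symm, n48, n48.symm, n26, n26.symm, n2_10, n2_10.symm,
        n6_10, n6_10.symm, n17, n17.symm, n39, n39.symm, n5_11, n5_11.symm]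
  have := girth_le_of_cycle hc
  simpa [w] using this

/-- If the base graph contains a K_{2,3} subgraph (vertices u1 ≠ u2 and
pairwise distinct w1, w2, w3 with all u_s adjacent to all w_t), and the voltage assignment
takes pairwise commuting values, then the permutation derived graph has girth at most 12,
i.e. it contains a cycle of length at most 12. -/
theorem stmt_10 {V : Type*} {n : ℕ} (hn : 1 ≤ n) (G : SimpleGraph V)
    (α : V → V → Equiv.Perm (Fin n)) (hα : ∀ u v, α v u = (α u v)⁻¹)
    (u1 u2 w1 w2 w3 : V) (hu : u1 ≠ u2)
    (hw12 : w1 ≠ w2) (hw13 : w1 ≠ w3) (hw23 : w2 ≠ w3)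
    (hadj : ∀ s ∈ ({u1, u2} : Set V), ∀ t ∈ ({w1, w2, w3} : Set V), G.Adj s t)
    (hcomm : ∀ u v u' v', Commute (α u v) (α u' v')) :
    (derivedGraph G α hα).girth ≤ 12 := by
  have hA1 : G.Adj u1 w1 := hadj u1 (by simp) w1 (by simp)
  have hA2 : G.Adj u1 w2 := hadj u1 (by simp) w2 (by simp)
  have hA3 : G.Adj u1 w3 := hadj u1 (by simp) w3 (by simp)
  have hB1 : G.Adj u2 w1 := hadj u2 (by simp) w1 (by simp)
  have hB2 : G.Adj u2 w2 := hadj u2 (by simp) w2 (by simp)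
  have hB3 : G.Adj u2 w3 := hadj u2 (by simp) w3 (by simp)
  by_cases h12 : ∃ j, (α u2 w1)⁻¹ (α u1 w1 j) = (α u2 w2)⁻¹ (α u1 w2 j)
  · obtain ⟨j, hj⟩ := h12
    exact le_trans (four_cycle_girth G α hα u1 u2 w1 w2 hu hw12 hA1 hA2 hB1 hB2 j hj)
      (by norm_num)
  by_cases h13 : ∃ j, (α u2 w1)⁻¹ (α u1 w1 j) = (α u2 w3)⁻¹ (α u1 w3 j)
  · obtain ⟨j, hj⟩ := h13
    exact le_trans (four_cycle_girth G α hα u1 u2 w1 w3 hu hw13 hA1 hA3 hB1 hB3 j hj)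
      (by norm_num)
  by_cases h23 : ∃ j, (α u2 w2)⁻¹ (α u1 w2 j) = (α u2 w3)⁻¹ (α u1 w3 j)
  · obtain ⟨j, hj⟩ := h23
    exact le_trans (four_cycle_girth G α hα u1 u2 w2 w3 hu hw23 hA2 hA3 hB2 hB3 j hj)
      (by norm_num)
  push_neg at h12 h13 h23
  exact twelve_cycle_girth G α hα u1 u2 w1 w2 w3 hu hw12 hw13 hw23
    (α u1 w1) (α u1 w2) (α u1 w3) (α u2 w1) (α u2 w2) (α u2 w3)
    rfl rfl rfl rfl rfl rfl
    (hcomm _ _ _ _) (hcomm _ _ _ _) (hcomm _ _ _ _) (hcomm _ _ _ _) (hcomm _ _ _ _)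
    (hcomm _ _ _ _) (hcomm _ _ _ _) (hcomm _ _ _ _) (hcomm _ _ _ _) (hcomm _ _ _ _)
    (hcomm _ _ _ _) (hcomm _ _ _ _) (hcomm _ _ _ _) (hcomm _ _ _ _) (hcomm _ _ _ _)
    hA1 hA2 hA3 hB1 hB2 hB3 ⟨0, hn⟩ h12 h13 h23
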